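/- Let X : [0,1] → [0,1] be non-decreasing with 0 ≤ X(v) ≤ v for all v, and suppose X(v)(v - X(v)) = 0 for almost every v ∈ [0,1]. Then there exists v* ∈ [0,1] such that X(v) = 0 for all v < v* and X(v) = v for all v > v*. -/

import Mathlib

open Set MeasureTheory

lemma exists_good_pt {P : ℝ → Prop}
    (hae : ∀ᵐ v ∂(MeasureTheory.volume.restrict (Set.Icc (0 : ℝ) 1)), P v)
    {c d : ℝ} (hcd : c < d) (hsub : Set.Ioo c d ⊆ Set.Icc 0 1) :
    ∃ w ∈ Set.Ioo c d, P w := by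
  by_contra h
  push_neg at h
  have hsubN : Set.Ioo c d ⊆ {v | ¬ P v} := fun v hv => h v hv
  have h0 : (MeasureTheory.volume.restrict (Set.Icc (0 : ℝ) 1)) {v | ¬ P v} = 0 := by
    rwa [MeasureTheory.ae_iff] at hae
  have hle : (MeasureTheory.volume.restrict (Set.Icc (0 : ℝ) 1)) (Set.Ioo c d) = 0 :=
    le_antisymm (h0 ▸ measure_mono hsubN) zero_le
  rw [MeasureTheory.Measure.restrict_apply measurableSet_Ioo,
    Set.inter_eq_left.mpr hsub, Real.volume_Ioo] at hle
  have : d - c ≤ 0 := by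
    by_contra hpos
    push_neg at hpos
    simp [ENNReal.ofReal_eq_zero] at hle
    linarith
  linarith

/-- A non-decreasing `X` with `0 ≤ X(v) ≤ v` such that a.e. `X(v) ∈ {0, v}` is a
threshold schedule: zero below some cutoff `v*`, the identity above it. -/
theorem stmt_7 (X : ℝ → ℝ)
    (hXmono : MonotoneOn X (Set.Icc 0 1))
    (hX : ∀ v ∈ Set.Icc (0 : ℝ) 1, 0 ≤ X v ∧ X v ≤ v)
    (hae : ∀ᵐ v ∂(MeasureTheory.volume.restrict (Set.Icc (0 : ℝ) 1)),
      X v * (v - X v) = 0) :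
    ∃ vstar ∈ Set.Icc (0 : ℝ) 1,
      (∀ v ∈ Set.Icc (0 : ℝ) 1, v < vstar → X v = 0) ∧
      (∀ v ∈ Set.Icc (0 : ℝ) 1, vstar < v → X v = v) := by
  set T : Set ℝ := insert 1 {v | v ∈ Set.Icc (0:ℝ) 1 ∧ 0 < X v} with hT
  have hTne : T.Nonempty := ⟨1, Or.inl rfl⟩
  have hTbdd : BddBelow T := ⟨0, by
    rintro v (rfl | ⟨hv, _⟩)
    · norm_num
    · exact hv.1⟩
  set vstar := sInf T with hvstar
  have hv0 : 0 ≤ vstar := le_csInf hTne (by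
    rintro v (rfl | ⟨hv, _⟩)
    · norm_num
    · exact hv.1)
  have hv1 : vstar ≤ 1 := csInf_le hTbdd (Or.inl rfl)
  refine ⟨vstar, ⟨hv0, hv1⟩, ?_, ?_⟩
  · intro v hv hvlt
    by_contra hne
    have hTv : v ∈ T := Or.inr ⟨hv, lt_of_le_of_ne (hX v hv).1 (Ne.symm hne)⟩
    exact absurd (csInf_le hTbdd hTv) (not_le.mpr hvlt)
  · intro v hv hvgt
    -- find a ∈ T, a < v, a ≠ 1
    obtain ⟨a, haT, hav⟩ := exists_lt_of_csInf_lt hTne hvgt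
    have ha : a ∈ Set.Icc (0:ℝ) 1 ∧ 0 < X a := by
      rcases haT with rfl | h
      · exact absurd hav (not_lt.mpr hv.2)
      · exact h
    -- show X v ≥ v
    have hge : v ≤ X v := by
      by_contra hlt
      push_neg at hlt
      set c := max a (X v) with hc
      have hcv : c < v := max_lt hav hlt
      have hsub2 : Set.Ioo c v ⊆ Set.Icc (0:ℝ) 1 := fun w hw =>
        ⟨le_trans (le_trans ha.1.1 (le_max_left _ _)) hw.1.le, le_trans hw.2.le hv.2⟩
      obtain ⟨w, hw, hPw⟩ := exists_good_pt hae hcv hsub2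
      have hwIcc : w ∈ Set.Icc (0:ℝ) 1 := hsub2 hw
      have hXw_pos : 0 < X w :=
        lt_of_lt_of_le ha.2 (hXmono ha.1 hwIcc (le_trans (le_max_left _ _) hw.1.le))
      have hXw : X w = w := by
        rcases mul_eq_zero.mp hPw with h | h
        · exact absurd h (ne_of_gt hXw_pos)
        · linarith [sub_eq_zero.mp h]
      have : X w ≤ X v := hXmono hwIcc hv hw.2.le
      rw [hXw] at this
      have : w ≤ X v := this
      have : X v < w := lt_of_le_of_lt (le_max_right a (X v)) hw.1
      linarith
    exact le_antisymm (hX v hv).2 hge
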